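/- Let (L,α) be a Hom-Lie-Yamaguti superalgebra and let (f_t, g_t) and (f'_t, g'_t) be two equivalent 1-parameter formal deformations of L via a formal isomorphism φ_t = id + Σ_{i≥1} φ_i t^i. Then the infinitesimals satisfy f₁(x₁,x₂) - f'₁(x₁,x₂) = [φ₁(x₁),x₂] + [x₁,φ₁(x₂)] - φ₁([x₁,x₂]) and g₁(x₁,x₂,x₃) - g'₁(x₁,x₂,x₃) = {φ₁(x₁),x₂,x₃} + {x₁,φ₁(x₂),x₃} + {x₁,x₂,φ₁(x₃)} - φ₁({x₁,x₂,x₃}); i.e., (f₁ - f'₁, g₁ - g'₁) is a coboundary, so (f₁,g₁) and (f'₁,g'₁) define the same cohomology class in H²(L,L) × H³(L,L). -/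

import Mathlib

noncomputable section

/-- The Koszul sign `(-1)^{ij}` for parities `i j : ZMod 2`. -/
def sg (K : Type*) [Field K] (i j : ZMod 2) : K := (-1 : K) ^ (i.val * j.val)

/-- The underlying data of a Hom-Lie–Yamaguti superalgebra: a `ZMod 2`-grading,
a binary bracket, a ternary bracket and a twisting map `α`. -/
structure HLYSData (K : Type*) [Field K] (L : Type*) [AddCommGroup L] [Module K L] where
  grade : ZMod 2 → Submodule K L
  br : L →ₗ[K] L →ₗ[K] L
  tr : L →ₗ[K] L →ₗ[K] L →ₗ[K] L
  α : L →ₗ[K] L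

namespace HLYSData

variable {K : Type*} [Field K] {L : Type*} [AddCommGroup L] [Module K L]

/-- The iterate `α^k` of the structure map. -/
def pα (A : HLYSData K L) : ℕ → (L →ₗ[K] L)
  | 0 => LinearMap.id
  | n + 1 => A.α ∘ₗ A.pα n

/-- Axioms (SHLY1)–(SHLY8) of a Hom-Lie–Yamaguti superalgebra, stated on
homogeneous elements. -/
structure IsHLYS (A : HLYSData K L) : Prop where
  grade_α : ∀ i x, x ∈ A.grade i → A.α x ∈ A.grade i
  grade_br : ∀ i j x y, x ∈ A.grade i → y ∈ A.grade j → A.br x y ∈ A.grade (i + j)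
  grade_tr : ∀ i j m x y z, x ∈ A.grade i → y ∈ A.grade j → z ∈ A.grade m →
    A.tr x y z ∈ A.grade (i + j + m)
  shly1 : ∀ x y, A.α (A.br x y) = A.br (A.α x) (A.α y)
  shly2 : ∀ x y z, A.α (A.tr x y z) = A.tr (A.α x) (A.α y) (A.α z)
  shly3 : ∀ i j x y, x ∈ A.grade i → y ∈ A.grade j → A.br x y = -(sg K i j • A.br y x)
  shly4 : ∀ i j x y z, x ∈ A.grade i → y ∈ A.grade j → A.tr x y z = -(sg K i j • A.tr y x z)
  shly5 : ∀ i j m x y z, x ∈ A.grade i → y ∈ A.grade j → z ∈ A.grade m →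
    sg K i m • (A.br (A.br x y) (A.α z) + A.tr x y z)
      + sg K j i • (A.br (A.br y z) (A.α x) + A.tr y z x)
      + sg K m j • (A.br (A.br z x) (A.α y) + A.tr z x y) = 0
  shly6 : ∀ i j m n x y z u, x ∈ A.grade i → y ∈ A.grade j → z ∈ A.grade m → u ∈ A.grade n →
    sg K i m • A.tr (A.br x y) (A.α z) (A.α u)
      + sg K j i • A.tr (A.br y z) (A.α x) (A.α u)
      + sg K m j • A.tr (A.br z x) (A.α y) (A.α u) = 0
  shly7 : ∀ i j m n x y u v, x ∈ A.grade i → y ∈ A.grade j → u ∈ A.grade m → v ∈ A.grade n →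
    A.tr (A.α x) (A.α y) (A.br u v)
      = A.br (A.tr x y u) (A.α (A.α v))
        + sg K m (i + j) • A.br (A.α (A.α u)) (A.tr x y v)
  shly8 : ∀ i j m n p x y u v w, x ∈ A.grade i → y ∈ A.grade j → u ∈ A.grade m →
      v ∈ A.grade n → w ∈ A.grade p →
    A.tr (A.α (A.α x)) (A.α (A.α y)) (A.tr u v w)
      = A.tr (A.tr x y u) (A.α (A.α v)) (A.α (A.α w))
        + sg K m (i + j) • A.tr (A.α (A.α u)) (A.tr x y v) (A.α (A.α w))
        + sg K (m + n) (i + j) • A.tr (A.α (A.α u)) (A.α (A.α v)) (A.tr x y w)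

/-- `D` is a homogeneous linear map of degree `s`. -/
def IsHomog (A : HLYSData K L) (s : ZMod 2) (D : L →ₗ[K] L) : Prop :=
  ∀ i x, x ∈ A.grade i → D x ∈ A.grade (i + s)

/-- Homogeneous `α^k`-derivations of degree `s`. -/
def IsDer (A : HLYSData K L) (k : ℕ) (s : ZMod 2) (D : L →ₗ[K] L) : Prop :=
  A.IsHomog s D ∧ (∀ x, D (A.α x) = A.α (D x)) ∧
  (∀ i j x y, x ∈ A.grade i → y ∈ A.grade j →
    D (A.br x y) = A.br (D x) (A.pα k y) + sg K s i • A.br (A.pα k x) (D y)) ∧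
  (∀ i j m x y z, x ∈ A.grade i → y ∈ A.grade j → z ∈ A.grade m →
    D (A.tr x y z)
      = A.tr (D x) (A.pα k y) (A.pα k z)
        + sg K s i • A.tr (A.pα k x) (D y) (A.pα k z)
        + sg K s (i + j) • A.tr (A.pα k x) (A.pα k y) (D z))

/-- Homogeneous generalized `α^k`-derivations of degree `s`. -/
def IsGDer (A : HLYSData K L) (k : ℕ) (s : ZMod 2) (D : L →ₗ[K] L) : Prop :=
  A.IsHomog s D ∧ ∃ D' D'' D''' : L →ₗ[K] L,
    A.IsHomog s D' ∧ A.IsHomog s D'' ∧ A.IsHomog s D''' ∧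
    (∀ i j x y, x ∈ A.grade i → y ∈ A.grade j →
      A.br (D x) (A.pα k y) + sg K s i • A.br (A.pα k x) (D' y) = D'' (A.br x y)) ∧
    (∀ i j m x y z, x ∈ A.grade i → y ∈ A.grade j → z ∈ A.grade m →
      A.tr (D x) (A.pα k y) (A.pα k z)
          + sg K s i • A.tr (A.pα k x) (D' y) (A.pα k z)
          + sg K s (i + j) • A.tr (A.pα k x) (A.pα k y) (D'' z) = D''' (A.tr x y z))

/-- Homogeneous `α^k`-quasiderivations of degree `s`. -/
def IsQDer (A : HLYSData K L) (k : ℕ) (s : ZMod 2) (D : L →ₗ[K] L) : Prop :=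
  A.IsHomog s D ∧ ∃ D' D'' : L →ₗ[K] L, A.IsHomog s D' ∧ A.IsHomog s D'' ∧
    (∀ i j x y, x ∈ A.grade i → y ∈ A.grade j →
      A.br (D x) (A.pα k y) + sg K s i • A.br (A.pα k x) (D y) = D' (A.br x y)) ∧
    (∀ i j m x y z, x ∈ A.grade i → y ∈ A.grade j → z ∈ A.grade m →
      A.tr (D x) (A.pα k y) (A.pα k z)
          + sg K s i • A.tr (A.pα k x) (D y) (A.pα k z)
          + sg K s (i + j) • A.tr (A.pα k x) (A.pα k y) (D z) = D'' (A.tr x y z))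

/-- The `α^k`-centroid (homogeneous elements of degree `s`). -/
def IsCent (A : HLYSData K L) (k : ℕ) (s : ZMod 2) (D : L →ₗ[K] L) : Prop :=
  A.IsHomog s D ∧
  (∀ i j x y, x ∈ A.grade i → y ∈ A.grade j →
    A.br (D x) (A.pα k y) = D (A.br x y) ∧
    sg K s i • A.br (A.pα k x) (D y) = D (A.br x y)) ∧
  (∀ i j m x y z, x ∈ A.grade i → y ∈ A.grade j → z ∈ A.grade m →
    A.tr (D x) (A.pα k y) (A.pα k z) = D (A.tr x y z) ∧
    sg K s i • A.tr (A.pα k x) (D y) (A.pα k z) = D (A.tr x y z) ∧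
    sg K s (i + j) • A.tr (A.pα k x) (A.pα k y) (D z) = D (A.tr x y z))

/-- The `α^k`-quasicentroid (homogeneous elements of degree `s`). -/
def IsQCent (A : HLYSData K L) (k : ℕ) (s : ZMod 2) (D : L →ₗ[K] L) : Prop :=
  A.IsHomog s D ∧
  (∀ i j x y, x ∈ A.grade i → y ∈ A.grade j →
    A.br (D x) (A.pα k y) = sg K s i • A.br (A.pα k x) (D y)) ∧
  (∀ i j m x y z, x ∈ A.grade i → y ∈ A.grade j → z ∈ A.grade m →
    A.tr (D x) (A.pα k y) (A.pα k z) = sg K s i • A.tr (A.pα k x) (D y) (A.pα k z) ∧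
    A.tr (D x) (A.pα k y) (A.pα k z) = sg K s (i + j) • A.tr (A.pα k x) (A.pα k y) (D z))

/-- Central derivations (with twist `α^k`, degree `s`). -/
def IsZDer (A : HLYSData K L) (k : ℕ) (s : ZMod 2) (D : L →ₗ[K] L) : Prop :=
  A.IsHomog s D ∧ (∀ x, D (A.α x) = A.α (D x)) ∧
  (∀ x y, A.br (D x) (A.pα k y) = 0) ∧ (∀ x y, D (A.br x y) = 0) ∧
  (∀ x y z, A.tr (D x) (A.pα k y) (A.pα k z) = 0) ∧ (∀ x y z, D (A.tr x y z) = 0)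

/-- The center `Z(L)`. -/
def center (A : HLYSData K L) : Set L :=
  {x | ∀ y z, A.br x y = 0 ∧ A.tr x y z = 0}

end HLYSData

/-- The supercommutator of two endomorphisms of parities `a` and `b`. -/
def scomm (K : Type*) [Field K] {L : Type*} [AddCommGroup L] [Module K L]
    (a b : ZMod 2) (f g : L →ₗ[K] L) : L →ₗ[K] L :=
  f ∘ₗ g - sg K a b • (g ∘ₗ f)

open Finset in
/-- A 1-parameter formal deformation of a Hom-Lie–Yamaguti superalgebra,
described by the coefficients `f n`, `g n` of `f_t = Σ f_n tⁿ`,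
`g_t = Σ g_n tⁿ` with `f 0`, `g 0` the original brackets; the conditions are
the deformation equations (5.9)–(5.16), i.e. the levelwise Hom-Lie–Yamaguti
superalgebra axioms for `(L[[t]], f_t, g_t, α)`. -/
def IsDeformation {K : Type*} [Field K] {L : Type*} [AddCommGroup L] [Module K L]
    (A : HLYSData K L)
    (f : ℕ → L →ₗ[K] L →ₗ[K] L) (g : ℕ → L →ₗ[K] L →ₗ[K] L →ₗ[K] L) : Prop :=
  f 0 = A.br ∧ g 0 = A.tr ∧
  (∀ n x y, A.α (f n x y) = f n (A.α x) (A.α y)) ∧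
  (∀ n x y z, A.α (g n x y z) = g n (A.α x) (A.α y) (A.α z)) ∧
  (∀ n i j x y, x ∈ A.grade i → y ∈ A.grade j → f n x y = -(sg K i j • f n y x)) ∧
  (∀ n i j x y z, x ∈ A.grade i → y ∈ A.grade j → g n x y z = -(sg K i j • g n y x z)) ∧
  (∀ n i j m x y z, x ∈ A.grade i → y ∈ A.grade j → z ∈ A.grade m →
    sg K i m • ((∑ p ∈ antidiagonal n, f p.1 (f p.2 x y) (A.α z)) + g n x y z)
      + sg K j i • ((∑ p ∈ antidiagonal n, f p.1 (f p.2 y z) (A.α x)) + g n y z x)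
      + sg K m j • ((∑ p ∈ antidiagonal n, f p.1 (f p.2 z x) (A.α y)) + g n z x y) = 0) ∧
  (∀ n i j m x y z u, x ∈ A.grade i → y ∈ A.grade j → z ∈ A.grade m →
    sg K i m • (∑ p ∈ antidiagonal n, g p.1 (f p.2 x y) (A.α z) (A.α u))
      + sg K j i • (∑ p ∈ antidiagonal n, g p.1 (f p.2 y z) (A.α x) (A.α u))
      + sg K m j • (∑ p ∈ antidiagonal n, g p.1 (f p.2 z x) (A.α y) (A.α u)) = 0) ∧
  (∀ n i j m x y u v, x ∈ A.grade i → y ∈ A.grade j → u ∈ A.grade m →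
    (∑ p ∈ antidiagonal n, g p.1 (A.α x) (A.α y) (f p.2 u v))
      = ∑ p ∈ antidiagonal n,
          (f p.1 (g p.2 x y u) (A.α (A.α v))
            + sg K m (i + j) • f p.1 (A.α (A.α u)) (g p.2 x y v))) ∧
  (∀ n i j m l x y u v w, x ∈ A.grade i → y ∈ A.grade j → u ∈ A.grade m →
      v ∈ A.grade l →
    (∑ p ∈ antidiagonal n, g p.1 (A.α (A.α x)) (A.α (A.α y)) (g p.2 u v w))
      = ∑ p ∈ antidiagonal n,
          (g p.1 (g p.2 x y u) (A.α (A.α v)) (A.α (A.α w))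
            + sg K m (i + j) • g p.1 (A.α (A.α u)) (g p.2 x y v) (A.α (A.α w))
            + sg K (m + l) (i + j) • g p.1 (A.α (A.α u)) (A.α (A.α v)) (g p.2 x y w)))

open Finset in
/-- Equivalence of two 1-parameter formal deformations via a formal isomorphism
`φ_t = Σ φ_n tⁿ` with `φ 0 = id`, `φ_t ∘ α = α ∘ φ_t`,
`φ_t (f_t x y) = f'_t (φ_t x) (φ_t y)` and
`φ_t (g_t x y z) = g'_t (φ_t x) (φ_t y) (φ_t z)`, stated coefficientwise. -/
def AreEquivalentDeformations {K : Type*} [Field K] {L : Type*} [AddCommGroup L]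
    [Module K L] (A : HLYSData K L)
    (f f' : ℕ → L →ₗ[K] L →ₗ[K] L) (g g' : ℕ → L →ₗ[K] L →ₗ[K] L →ₗ[K] L)
    (φ : ℕ → L →ₗ[K] L) : Prop :=
  φ 0 = LinearMap.id ∧ (∀ n x, φ n (A.α x) = A.α (φ n x)) ∧
  (∀ n x y,
    (∑ p ∈ antidiagonal n, φ p.1 (f p.2 x y))
      = ∑ p ∈ antidiagonal n, ∑ q ∈ antidiagonal p.2, f' p.1 (φ q.1 x) (φ q.2 y)) ∧
  (∀ n x y z,
    (∑ p ∈ antidiagonal n, φ p.1 (g p.2 x y z))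
      = ∑ p ∈ antidiagonal n, ∑ q ∈ antidiagonal p.2, ∑ r ∈ antidiagonal q.2,
          g' p.1 (φ q.1 x) (φ r.1 y) (φ r.2 z))

/-- equivalent 1-parameter formal deformations have cohomologous
infinitesimals: `(f₁ - f'₁, g₁ - g'₁)` is the coboundary of `φ₁`, so `(f₁, g₁)`
and `(f'₁, g'₁)` define the same class in `H²(L,L) × H³(L,L)`. -/
theorem equivalent_deformations_have_cohomologous_infinitesimals
    {K : Type*} [Field K] {L : Type*} [AddCommGroup L] [Module K L]
    (A : HLYSData K L) (hA : A.IsHLYS)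
    (f f' : ℕ → L →ₗ[K] L →ₗ[K] L) (g g' : ℕ → L →ₗ[K] L →ₗ[K] L →ₗ[K] L)
    (φ : ℕ → L →ₗ[K] L)
    (hfg : IsDeformation A f g) (hfg' : IsDeformation A f' g')
    (heq : AreEquivalentDeformations A f f' g g' φ) :
    (∀ x y, f 1 x y - f' 1 x y
        = A.br (φ 1 x) y + A.br x (φ 1 y) - φ 1 (A.br x y)) ∧
    (∀ x y z, g 1 x y z - g' 1 x y z
        = A.tr (φ 1 x) y z + A.tr x (φ 1 y) z + A.tr x y (φ 1 z)
          - φ 1 (A.tr x y z)) := by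
  obtain ⟨hφ0, hφα, hF, hG⟩ := heq
  obtain ⟨hf0, hg0, _⟩ := hfg
  obtain ⟨hf0', hg0', _⟩ := hfg'
  have h1 : (Finset.HasAntidiagonal.antidiagonal 1 : Finset (ℕ × ℕ)) = {(0, 1), (1, 0)} := by decide
  have h0 : (Finset.HasAntidiagonal.antidiagonal 0 : Finset (ℕ × ℕ)) = {(0, 0)} := by decide
  have ne : ((0, 1) : ℕ × ℕ) ≠ (1, 0) := by decide
  constructor
  · intro x y
    have h := hF 1 x y
    simp only [h1, h0, Finset.sum_pair ne, Finset.sum_singleton, hφ0, hf0, hf0',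
      LinearMap.id_coe, id_eq] at h
    linear_combination (norm := abel) h
  · intro x y z
    have h := hG 1 x y z
    simp only [h1, h0, Finset.sum_pair ne, Finset.sum_singleton, hφ0, hg0, hg0',
      LinearMap.id_coe, id_eq] at h
    linear_combination (norm := abel) h
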